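/- Let m, n, t be positive integers and let {Ψ_{j1}, …, Ψ_{j(mn)}}, j = 1, …, t, be t mutually unbiased orthonormal bases of the real Hilbert space ℝ^m ⊗ ℝ^n ≅ ℝ^(mn). Then Σ_{j=1}^{t} Σ_{i=1}^{mn} P(Tr_A(Ψ_{ji} Ψ_{ji}^t)) ≤ (m(m+1)/2 + t − 1)·n. -/

import Mathlib

open Matrix Finset

/-- Left partial trace: trace out the first (A) factor. -/
noncomputable def trA {m n : ℕ} (X : Matrix (Fin m × Fin n) (Fin m × Fin n) ℝ) :
    Matrix (Fin n) (Fin n) ℝ :=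
  Matrix.of fun j j' => ∑ i : Fin m, X (i, j) (i, j')

/- ### Auxiliary machinery -/

/-- Hilbert–Schmidt inner product of two "matrices" given as functions. -/
noncomputable def mubIP {α : Type*} [Fintype α] (X Y : α → α → ℝ) : ℝ :=
  ∑ a, ∑ b, X a b * Y a b

lemma mubIP_self_nonneg {α : Type*} [Fintype α] (X : α → α → ℝ) : 0 ≤ mubIP X X :=
  Finset.sum_nonneg fun _ _ => Finset.sum_nonneg fun _ _ => mul_self_nonneg _

lemma mub_sum_comm3 {α β γ : Type*} [Fintype α] [Fintype β] [Fintype γ]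
    (f : α → β → γ → ℝ) :
    ∑ a, ∑ b, ∑ c, f a b c = ∑ c, ∑ a, ∑ b, f a b c := by
  calc ∑ a, ∑ b, ∑ c, f a b c
      = ∑ a, ∑ c, ∑ b, f a b c := Finset.sum_congr rfl fun a _ => Finset.sum_comm
    _ = ∑ c, ∑ a, ∑ b, f a b c := Finset.sum_comm

lemma mub_sum_comm3' {α β γ : Type*} [Fintype α] [Fintype β] [Fintype γ]
    (f : α → β → γ → ℝ) :
    ∑ a, ∑ b, ∑ c, f a b c = ∑ b, ∑ c, ∑ a, f a b c := by
  calc ∑ a, ∑ b, ∑ c, f a b c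
      = ∑ b, ∑ a, ∑ c, f a b c := Finset.sum_comm
    _ = ∑ b, ∑ c, ∑ a, f a b c := Finset.sum_congr rfl fun b _ => Finset.sum_comm

lemma mub_sum_comm4 {α β γ δ : Type*} [Fintype α] [Fintype β] [Fintype γ] [Fintype δ]
    (f : α → β → γ → δ → ℝ) :
    ∑ a, ∑ b, ∑ c, ∑ d, f a b c d = ∑ c, ∑ d, ∑ a, ∑ b, f a b c d := by
  calc ∑ a, ∑ b, ∑ c, ∑ d, f a b c d
      = ∑ a, ∑ c, ∑ d, ∑ b, f a b c d :=
        Finset.sum_congr rfl fun a _ => mub_sum_comm3' (fun b c d => f a b c d)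
    _ = ∑ c, ∑ a, ∑ d, ∑ b, f a b c d := Finset.sum_comm
    _ = ∑ c, ∑ d, ∑ a, ∑ b, f a b c d := Finset.sum_congr rfl fun c _ => Finset.sum_comm

/-- Bessel-type inequality for a family of "matrices" whose Gram operator is a contraction. -/
lemma mub_bessel {α β : Type*} [Fintype α] [Fintype β] (q : β → α → α → ℝ)
    (hGram : ∀ c : β → ℝ,
      (∑ p, ∑ p', c p * c p' * mubIP (q p) (q p')) ≤ ∑ p, (c p)^2)
    (Z : α → α → ℝ) : ∑ p, (mubIP (q p) Z)^2 ≤ mubIP Z Z := by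
  set c : β → ℝ := fun p => mubIP (q p) Z with hc
  set W : α → α → ℝ := fun a b => Z a b - ∑ p, c p * q p a b with hWdef
  have hZS : ∑ a, ∑ b, Z a b * (∑ p, c p * q p a b) = ∑ p, (c p)^2 := by
    calc ∑ a, ∑ b, Z a b * ∑ p, c p * q p a b
        = ∑ a, ∑ b, ∑ p, c p * (q p a b * Z a b) := by
          refine Finset.sum_congr rfl fun a _ => Finset.sum_congr rfl fun b _ => ?_
          rw [Finset.mul_sum]
          exact Finset.sum_congr rfl fun p _ => by ring
      _ = ∑ p, ∑ a, ∑ b, c p * (q p a b * Z a b) := mub_sum_comm3 _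
      _ = ∑ p, (c p)^2 := by
          refine Finset.sum_congr rfl fun p _ => ?_
          simp only [← Finset.mul_sum]
          rw [show (∑ a, ∑ b, q p a b * Z a b) = mubIP (q p) Z from rfl]
          simp [hc, pow_two]
  have hSS : ∑ a, ∑ b, (∑ p, c p * q p a b) * (∑ p', c p' * q p' a b)
      = ∑ p, ∑ p', c p * c p' * mubIP (q p) (q p') := by
    calc ∑ a, ∑ b, (∑ p, c p * q p a b) * (∑ p', c p' * q p' a b)
        = ∑ a, ∑ b, ∑ p, ∑ p', (c p * c p') * (q p a b * q p' a b) := by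
          refine Finset.sum_congr rfl fun a _ => Finset.sum_congr rfl fun b _ => ?_
          rw [Finset.sum_mul_sum]
          exact Finset.sum_congr rfl fun p _ => Finset.sum_congr rfl fun p' _ => by ring
      _ = ∑ p, ∑ p', ∑ a, ∑ b, (c p * c p') * (q p a b * q p' a b) := mub_sum_comm4 _
      _ = ∑ p, ∑ p', c p * c p' * mubIP (q p) (q p') := by
          refine Finset.sum_congr rfl fun p _ => Finset.sum_congr rfl fun p' _ => ?_
          simp only [← Finset.mul_sum]
          rfl
  have hWW : mubIP W W = mubIP Z Z - 2 * (∑ p, (c p)^2)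
      + ∑ p, ∑ p', c p * c p' * mubIP (q p) (q p') := by
    calc mubIP W W
        = ∑ a, ∑ b, (Z a b * Z a b
            - 2 * (Z a b * (∑ p, c p * q p a b))
            + (∑ p, c p * q p a b) * (∑ p', c p' * q p' a b)) := by
          unfold mubIP
          refine Finset.sum_congr rfl fun a _ => Finset.sum_congr rfl fun b _ => ?_
          simp only [hWdef]
          ring
      _ = (∑ a, ∑ b, Z a b * Z a b)
          - 2 * (∑ a, ∑ b, Z a b * (∑ p, c p * q p a b))
          + ∑ a, ∑ b, (∑ p, c p * q p a b) * (∑ p', c p' * q p' a b) := by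
          simp only [Finset.sum_add_distrib, Finset.sum_sub_distrib, ← Finset.mul_sum]
      _ = mubIP Z Z - 2 * (∑ p, (c p)^2)
          + ∑ p, ∑ p', c p * c p' * mubIP (q p) (q p') := by
          rw [hZS, hSS]; rfl
  have h0 := mubIP_self_nonneg W
  have hg := hGram c
  have : ∑ p, (c p)^2 ≤ mubIP Z Z := by linarith [hWW ▸ h0]
  simpa [hc] using this

/-- The Gram bound for a family consisting of `t` mutually orthogonal groups, each with
Gram matrix `1 - J/d`. -/
lemma mub_gram_bound {t N : ℕ} (d : ℝ) (hd : 0 < d)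
    {α : Type*} [Fintype α] (Q : Fin t → Fin N → α → α → ℝ)
    (hG : ∀ j j' i i', mubIP (Q j i) (Q j' i') =
       if j = j' then (if i = i' then (1:ℝ) else 0) - 1/d else 0)
    (c : Fin t × Fin N → ℝ) :
    (∑ p, ∑ p', c p * c p' * mubIP (Q p.1 p.2) (Q p'.1 p'.2)) ≤ ∑ p, (c p)^2 := by
  simp only [Fintype.sum_prod_type]
  calc ∑ j, ∑ i, ∑ j', ∑ i', c (j,i) * c (j',i') * mubIP (Q j i) (Q j' i')
      = ∑ j, ∑ i, ∑ j', ∑ i',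
          (if j = j' then c (j,i) * c (j',i') * ((if i = i' then (1:ℝ) else 0) - 1/d)
           else 0) := by
        simp only [hG, mul_ite, mul_zero]
    _ = ∑ j, ∑ j', ∑ i, ∑ i',
          (if j = j' then c (j,i) * c (j',i') * ((if i = i' then (1:ℝ) else 0) - 1/d)
           else 0) := Finset.sum_congr rfl fun j _ => Finset.sum_comm
    _ = ∑ j, ∑ i, ∑ i', c (j,i) * c (j,i') * ((if i = i' then (1:ℝ) else 0) - 1/d) := by
        refine Finset.sum_congr rfl fun j _ => ?_
        rw [Finset.sum_eq_single j]
        · simp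
        · intro j' _ hj'; simp [Ne.symm hj']
        · intro h; exact absurd (Finset.mem_univ j) h
    _ ≤ ∑ j, ∑ i, c (j,i) ^ 2 := by
        refine Finset.sum_le_sum fun j _ => ?_
        have hexp : ∑ i, ∑ i', c (j,i) * c (j,i') * ((if i = i' then (1:ℝ) else 0) - 1/d)
            = (∑ i, c (j,i)^2) - (∑ i, c (j,i)) * (∑ i, c (j,i)) / d := by
          have h1 : ∀ i : Fin N, ∑ i', c (j,i) * c (j,i') * ((if i = i' then (1:ℝ) else 0) - 1/d)
              = (c (j,i))^2 - (∑ i', c (j,i) * c (j,i')) / d := by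
            intro i
            calc ∑ i', c (j,i) * c (j,i') * ((if i = i' then (1:ℝ) else 0) - 1/d)
                = ∑ i', ((if i = i' then c (j,i) * c (j,i') else 0)
                    - c (j,i) * c (j,i') / d) := by
                  refine Finset.sum_congr rfl fun i' _ => ?_
                  by_cases h : i = i' <;> simp [h] <;> ring
              _ = (∑ i', if i = i' then c (j,i) * c (j,i') else 0)
                    - (∑ i', c (j,i) * c (j,i')) / d := by
                  rw [Finset.sum_sub_distrib, Finset.sum_div]
              _ = (c (j,i))^2 - (∑ i', c (j,i) * c (j,i')) / d := by
                  rw [Finset.sum_ite_eq]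
                  simp [pow_two]
          calc ∑ i, ∑ i', c (j,i) * c (j,i') * ((if i = i' then (1:ℝ) else 0) - 1/d)
              = ∑ i, ((c (j,i))^2 - (∑ i', c (j,i) * c (j,i')) / d) :=
                Finset.sum_congr rfl fun i _ => h1 i
            _ = (∑ i, c (j,i)^2) - (∑ i, ∑ i', c (j,i) * c (j,i')) / d := by
                rw [Finset.sum_sub_distrib, Finset.sum_div]
            _ = (∑ i, c (j,i)^2) - (∑ i, c (j,i)) * (∑ i, c (j,i)) / d := by
                rw [← Finset.sum_mul_sum]
        rw [hexp]
        have : 0 ≤ (∑ i, c (j,i)) * (∑ i, c (j,i)) / d :=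
          div_nonneg (mul_self_nonneg _) hd.le
        linarith

/-- The projection of the matrix unit `E_{i₀ i₀'} ⊗ 1` onto traceless symmetric matrices. -/
noncomputable def Zm {m n : ℕ} (i₀ i₀' : Fin m) :
    (Fin m × Fin n) → (Fin m × Fin n) → ℝ :=
  fun a b => ((if a.1 = i₀ ∧ b.1 = i₀' ∧ a.2 = b.2 then (1:ℝ) else 0)
    + (if a.1 = i₀' ∧ b.1 = i₀ ∧ a.2 = b.2 then 1 else 0)) / 2
    - (if i₀ = i₀' ∧ a = b then 1/(m:ℝ) else 0)

lemma mub_collapse {m n : ℕ} (i₀ i₀' : Fin m) (f : (Fin m × Fin n) → (Fin m × Fin n) → ℝ) :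
    ∑ a : Fin m × Fin n, ∑ b : Fin m × Fin n,
      (if a.1 = i₀ ∧ b.1 = i₀' ∧ a.2 = b.2 then f a b else 0)
    = ∑ j₂ : Fin n, f (i₀, j₂) (i₀', j₂) := by
  have h1 : ∀ a : Fin m × Fin n,
      ∑ b : Fin m × Fin n, (if a.1 = i₀ ∧ b.1 = i₀' ∧ a.2 = b.2 then f a b else 0)
      = if a.1 = i₀ then f a (i₀', a.2) else 0 := by
    intro a
    rw [Finset.sum_eq_single (i₀', a.2)]
    · by_cases h : a.1 = i₀ <;> simp [h]
    · intro b _ hb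
      by_cases hc : a.1 = i₀ ∧ b.1 = i₀' ∧ a.2 = b.2
      · exact absurd (show b = (i₀', a.2) from Prod.ext_iff.mpr ⟨hc.2.1, hc.2.2.symm⟩) hb
      · simp [hc]
    · simp
  calc ∑ a : Fin m × Fin n, ∑ b : Fin m × Fin n,
        (if a.1 = i₀ ∧ b.1 = i₀' ∧ a.2 = b.2 then f a b else 0)
      = ∑ a : Fin m × Fin n, (if a.1 = i₀ then f a (i₀', a.2) else 0) :=
        Finset.sum_congr rfl fun a _ => h1 a
    _ = ∑ a₁ : Fin m, ∑ a₂ : Fin n, (if a₁ = i₀ then f (a₁, a₂) (i₀', a₂) else 0) := by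
        rw [Fintype.sum_prod_type]
    _ = ∑ j₂ : Fin n, f (i₀, j₂) (i₀', j₂) := by
        rw [Finset.sum_eq_single i₀]
        · simp
        · intro a₁ _ h; simp [h]
        · simp

lemma mubIP_Zm {m n : ℕ} (q : (Fin m × Fin n) → (Fin m × Fin n) → ℝ)
    (hsym : ∀ a b, q a b = q b a) (htr : ∑ a, q a a = 0) (i₀ i₀' : Fin m) :
    mubIP q (Zm i₀ i₀') = ∑ j₂ : Fin n, q (i₀, j₂) (i₀', j₂) := by
  have hterm : ∀ a b : Fin m × Fin n, q a b * Zm i₀ i₀' a b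
      = (if a.1 = i₀ ∧ b.1 = i₀' ∧ a.2 = b.2 then q a b else 0) / 2
        + (if a.1 = i₀' ∧ b.1 = i₀ ∧ a.2 = b.2 then q a b else 0) / 2
        - (if i₀ = i₀' ∧ a = b then q a b / (m:ℝ) else 0) := by
    intro a b
    unfold Zm
    by_cases h1 : a.1 = i₀ ∧ b.1 = i₀' ∧ a.2 = b.2 <;>
      by_cases h2 : a.1 = i₀' ∧ b.1 = i₀ ∧ a.2 = b.2 <;>
      by_cases h3 : i₀ = i₀' ∧ a = b <;>
      simp [h1, h2, h3] <;> (try split_ifs) <;> (try ring)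
  have hdiag : ∑ a : Fin m × Fin n, ∑ b : Fin m × Fin n,
      (if i₀ = i₀' ∧ a = b then q a b / (m:ℝ) else 0) = 0 := by
    by_cases h : i₀ = i₀'
    · simp only [h, true_and]
      calc ∑ a : Fin m × Fin n, ∑ b : Fin m × Fin n, (if a = b then q a b / (m:ℝ) else 0)
          = ∑ a : Fin m × Fin n, q a a / (m:ℝ) := by
            refine Finset.sum_congr rfl fun a _ => ?_
            rw [Finset.sum_ite_eq]
            simp
        _ = (∑ a : Fin m × Fin n, q a a) / (m:ℝ) := by rw [Finset.sum_div]
        _ = 0 := by rw [htr]; simp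
    · simp [h]
  calc mubIP q (Zm i₀ i₀')
      = ∑ a : Fin m × Fin n, ∑ b : Fin m × Fin n,
          ((if a.1 = i₀ ∧ b.1 = i₀' ∧ a.2 = b.2 then q a b else 0) / 2
          + (if a.1 = i₀' ∧ b.1 = i₀ ∧ a.2 = b.2 then q a b else 0) / 2
          - (if i₀ = i₀' ∧ a = b then q a b / (m:ℝ) else 0)) := by
        unfold mubIP
        exact Finset.sum_congr rfl fun a _ => Finset.sum_congr rfl fun b _ => hterm a b
    _ = (∑ a : Fin m × Fin n, ∑ b : Fin m × Fin n,
          (if a.1 = i₀ ∧ b.1 = i₀' ∧ a.2 = b.2 then q a b else 0)) / 2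
        + (∑ a : Fin m × Fin n, ∑ b : Fin m × Fin n,
          (if a.1 = i₀' ∧ b.1 = i₀ ∧ a.2 = b.2 then q a b else 0)) / 2
        - ∑ a : Fin m × Fin n, ∑ b : Fin m × Fin n,
          (if i₀ = i₀' ∧ a = b then q a b / (m:ℝ) else 0) := by
        simp only [Finset.sum_add_distrib, Finset.sum_sub_distrib, Finset.sum_div]
    _ = (∑ j₂ : Fin n, q (i₀, j₂) (i₀', j₂)) / 2
        + (∑ j₂ : Fin n, q (i₀', j₂) (i₀, j₂)) / 2 - 0 := by
        rw [mub_collapse, mub_collapse, hdiag]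
    _ = ∑ j₂ : Fin n, q (i₀, j₂) (i₀', j₂) := by
        have : (∑ j₂ : Fin n, q (i₀', j₂) (i₀, j₂)) = ∑ j₂ : Fin n, q (i₀, j₂) (i₀', j₂) :=
          Finset.sum_congr rfl fun j₂ _ => hsym _ _
        rw [this]; ring

lemma mubIP_Zm_self {m n : ℕ} (hm : 0 < m) (i₀ i₀' : Fin m) :
    mubIP (Zm (n := n) i₀ i₀') (Zm i₀ i₀')
      = if i₀ = i₀' then (n:ℝ)*((m:ℝ)-1)/m else (n:ℝ)/2 := by
  have hm0 : (m:ℝ) ≠ 0 := Nat.cast_ne_zero.mpr hm.ne'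
  by_cases heq : i₀ = i₀'
  · subst heq
    simp only [if_pos rfl]
    have hterm : ∀ a b : Fin m × Fin n, Zm i₀ i₀ a b * Zm i₀ i₀ a b
        = if a = b then (if a.1 = i₀ then ((1:ℝ)-1/m)^2 else (1/(m:ℝ))^2) else 0 := by
      intro a b
      unfold Zm
      by_cases hab : a = b
      · subst hab
        by_cases h : a.1 = i₀ <;> simp [h] <;> ring
      · have hc1 : ¬(a.1 = i₀ ∧ b.1 = i₀ ∧ a.2 = b.2) := fun hc =>
          hab (Prod.ext_iff.mpr ⟨hc.1.trans hc.2.1.symm, hc.2.2⟩)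
        simp [hc1, hab]
    calc mubIP (Zm (n := n) i₀ i₀) (Zm i₀ i₀)
        = ∑ a : Fin m × Fin n, ∑ b : Fin m × Fin n,
            (if a = b then (if a.1 = i₀ then ((1:ℝ)-1/m)^2 else (1/(m:ℝ))^2) else 0) := by
          unfold mubIP
          exact Finset.sum_congr rfl fun a _ => Finset.sum_congr rfl fun b _ => hterm a b
      _ = ∑ a : Fin m × Fin n, (if a.1 = i₀ then ((1:ℝ)-1/m)^2 else (1/(m:ℝ))^2) := by
          refine Finset.sum_congr rfl fun a _ => ?_
          rw [Finset.sum_ite_eq]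
          simp
      _ = ∑ a₁ : Fin m, ∑ a₂ : Fin n, (if a₁ = i₀ then ((1:ℝ)-1/m)^2 else (1/(m:ℝ))^2) := by
          rw [Fintype.sum_prod_type]
      _ = ∑ a₁ : Fin m, (if a₁ = i₀ then (n:ℝ)*((1:ℝ)-1/m)^2 else (n:ℝ)*(1/(m:ℝ))^2) := by
          refine Finset.sum_congr rfl fun a₁ _ => ?_
          split_ifs <;> simp [Finset.sum_const, card_univ] <;> ring
      _ = ∑ a₁ : Fin m, ((n:ℝ)*(1/(m:ℝ))^2
            + (if a₁ = i₀ then (n:ℝ)*((1:ℝ)-1/m)^2 - (n:ℝ)*(1/(m:ℝ))^2 else 0)) := by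
          refine Finset.sum_congr rfl fun a₁ _ => ?_
          split_ifs <;> ring
      _ = (m:ℝ)*((n:ℝ)*(1/(m:ℝ))^2)
            + ((n:ℝ)*((1:ℝ)-1/m)^2 - (n:ℝ)*(1/(m:ℝ))^2) := by
          rw [Finset.sum_add_distrib, Finset.sum_const, Finset.sum_ite_eq']
          simp [card_univ, nsmul_eq_mul]
      _ = (n:ℝ)*((m:ℝ)-1)/m := by field_simp; ring
  · simp only [if_neg heq]
    have hterm : ∀ a b : Fin m × Fin n, Zm i₀ i₀' a b * Zm i₀ i₀' a b
        = (if a.1 = i₀ ∧ b.1 = i₀' ∧ a.2 = b.2 then (1:ℝ)/4 else 0)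
          + (if a.1 = i₀' ∧ b.1 = i₀ ∧ a.2 = b.2 then (1:ℝ)/4 else 0) := by
      intro a b
      unfold Zm
      by_cases h1 : a.1 = i₀ ∧ b.1 = i₀' ∧ a.2 = b.2 <;>
        by_cases h2 : a.1 = i₀' ∧ b.1 = i₀ ∧ a.2 = b.2
      · exact absurd (h1.1.symm.trans h2.1) heq
      all_goals simp [h1, h2, heq] <;> (try ring)
    calc mubIP (Zm (n := n) i₀ i₀') (Zm i₀ i₀')
        = ∑ a : Fin m × Fin n, ∑ b : Fin m × Fin n,
            ((if a.1 = i₀ ∧ b.1 = i₀' ∧ a.2 = b.2 then (1:ℝ)/4 else 0)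
            + (if a.1 = i₀' ∧ b.1 = i₀ ∧ a.2 = b.2 then (1:ℝ)/4 else 0)) := by
          unfold mubIP
          exact Finset.sum_congr rfl fun a _ => Finset.sum_congr rfl fun b _ => hterm a b
      _ = (∑ _j₂ : Fin n, (1:ℝ)/4) + (∑ _j₂ : Fin n, (1:ℝ)/4) := by
          simp only [Finset.sum_add_distrib]
          rw [mub_collapse i₀ i₀' (fun _ _ => (1:ℝ)/4),
            mub_collapse i₀' i₀ (fun _ _ => (1:ℝ)/4)]
      _ = (n:ℝ)/2 := by
          simp [Finset.sum_const, card_univ, nsmul_eq_mul]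
          ring

lemma mub_purity_swap {m n : ℕ} (ψ : Fin m × Fin n → ℝ) :
    ∑ j₁ : Fin n, ∑ j₂ : Fin n,
      (∑ i : Fin m, ψ (i,j₁) * ψ (i,j₂)) * (∑ i : Fin m, ψ (i,j₂) * ψ (i,j₁))
    = ∑ i₀ : Fin m, ∑ i₀' : Fin m, (∑ j : Fin n, ψ (i₀,j) * ψ (i₀',j))^2 := by
  calc ∑ j₁ : Fin n, ∑ j₂ : Fin n,
        (∑ i : Fin m, ψ (i,j₁) * ψ (i,j₂)) * (∑ i : Fin m, ψ (i,j₂) * ψ (i,j₁))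
      = ∑ j₁ : Fin n, ∑ j₂ : Fin n, ∑ i : Fin m, ∑ i' : Fin m,
          (ψ (i,j₁) * ψ (i,j₂)) * (ψ (i',j₂) * ψ (i',j₁)) := by
        refine Finset.sum_congr rfl fun j₁ _ => Finset.sum_congr rfl fun j₂ _ => ?_
        rw [Finset.sum_mul_sum]
    _ = ∑ i : Fin m, ∑ i' : Fin m, ∑ j₁ : Fin n, ∑ j₂ : Fin n,
          (ψ (i,j₁) * ψ (i,j₂)) * (ψ (i',j₂) * ψ (i',j₁)) := mub_sum_comm4 _
    _ = ∑ i₀ : Fin m, ∑ i₀' : Fin m, (∑ j : Fin n, ψ (i₀,j) * ψ (i₀',j))^2 := by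
        refine Finset.sum_congr rfl fun i _ => Finset.sum_congr rfl fun i' _ => ?_
        rw [pow_two, Finset.sum_mul_sum]
        exact Finset.sum_congr rfl fun j₁ _ => Finset.sum_congr rfl fun j₂ _ => by ring

lemma mubIP_vec {α : Type*} [Fintype α] [DecidableEq α] (ψ φ : α → ℝ) (d : ℝ) :
    mubIP (fun a b => ψ a * ψ b - (if a = b then 1/d else 0))
       (fun a b => φ a * φ b - (if a = b then 1/d else 0))
    = (∑ a, ψ a * φ a)^2 - (∑ a, ψ a * ψ a)/d - (∑ a, φ a * φ a)/d
      + (Fintype.card α : ℝ)/d^2 := by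
  have hterm : ∀ a b : α,
      (ψ a * ψ b - (if a = b then 1/d else 0)) * (φ a * φ b - (if a = b then 1/d else 0))
      = (ψ a * φ a) * (ψ b * φ b)
        - (if a = b then ψ a * ψ b / d else 0)
        - (if a = b then φ a * φ b / d else 0)
        + (if a = b then 1/d^2 else 0) := by
    intro a b
    by_cases h : a = b <;> simp [h] <;> ring
  have step1 : mubIP (fun a b => ψ a * ψ b - (if a = b then 1/d else 0))
      (fun a b => φ a * φ b - (if a = b then 1/d else 0))
      = ∑ a, ∑ b, ((ψ a * φ a) * (ψ b * φ b)
        - (if a = b then ψ a * ψ b / d else 0)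
        - (if a = b then φ a * φ b / d else 0)
        + (if a = b then 1/d^2 else 0)) := by
    unfold mubIP
    exact Finset.sum_congr rfl fun a _ => Finset.sum_congr rfl fun b _ => hterm a b
  rw [step1]
  have hA : (∑ a, ∑ b, (ψ a * φ a) * (ψ b * φ b)) = (∑ a, ψ a * φ a)^2 := by
    rw [pow_two, Finset.sum_mul_sum]
  have hB : (∑ a, ∑ b, (if a = b then ψ a * ψ b / d else 0)) = (∑ a, ψ a * ψ a)/d := by
    rw [Finset.sum_div]
    refine Finset.sum_congr rfl fun a _ => ?_
    rw [Finset.sum_ite_eq]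
    simp
  have hC : (∑ a, ∑ b, (if a = b then φ a * φ b / d else 0)) = (∑ a, φ a * φ a)/d := by
    rw [Finset.sum_div]
    refine Finset.sum_congr rfl fun a _ => ?_
    rw [Finset.sum_ite_eq]
    simp
  have hD : (∑ a : α, ∑ b : α, (if a = b then 1/d^2 else 0)) = (Fintype.card α : ℝ)/d^2 := by
    have : ∀ a : α, (∑ b : α, (if a = b then 1/d^2 else 0)) = 1/d^2 := by
      intro a
      rw [Finset.sum_ite_eq]
      simp
    rw [Finset.sum_congr rfl fun a _ => this a]
    simp [Finset.sum_const, card_univ, nsmul_eq_mul]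
    ring
  simp only [Finset.sum_add_distrib, Finset.sum_sub_distrib]
  rw [hA, hB, hC, hD]

theorem mub_purity_bound_real (m n t : ℕ) (hm : 0 < m) (hn : 0 < n) (ht : 0 < t)
    (Ψ : Fin t → Fin (m * n) → (Fin m × Fin n) → ℝ)
    (horth : ∀ j, ∀ i i' : Fin (m * n),
      (∑ a, Ψ j i a * Ψ j i' a) = if i = i' then 1 else 0)
    (hmub : ∀ j j', j ≠ j' → ∀ i i' : Fin (m * n),
      |∑ a, Ψ j i a * Ψ j' i' a| = 1 / Real.sqrt (m * n)) :
    ∑ j : Fin t, ∑ i : Fin (m * n),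
        Matrix.trace (trA (Matrix.vecMulVec (Ψ j i) (Ψ j i)) ^ 2)
      ≤ ((m : ℝ) * (m + 1) / 2 + (t : ℝ) - 1) * n := by
  have hmR : (0:ℝ) < (m:ℝ) := by exact_mod_cast hm
  have hnR : (0:ℝ) < (n:ℝ) := by exact_mod_cast hn
  have hm0 : (m:ℝ) ≠ 0 := hmR.ne'
  have hn0 : (n:ℝ) ≠ 0 := hnR.ne'
  set d : ℝ := (m:ℝ) * n with hd
  have hd0 : 0 < d := mul_pos hmR hnR
  set Q : Fin t → Fin (m*n) → (Fin m × Fin n) → (Fin m × Fin n) → ℝ :=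
    fun j i a b => Ψ j i a * Ψ j i b - (if a = b then 1/d else 0) with hQ
  have hcard : (Fintype.card (Fin m × Fin n) : ℝ) = d := by
    simp [hd, Fintype.card_prod]
  -- Gram matrix of the family Q
  have hGQ : ∀ j j' i i', mubIP (Q j i) (Q j' i')
      = if j = j' then (if i = i' then (1:ℝ) else 0) - 1/d else 0 := by
    intro j j' i i'
    have hev := mubIP_vec (Ψ j i) (Ψ j' i') d
    have e1 : mubIP (Q j i) (Q j' i')
        = (∑ a, Ψ j i a * Ψ j' i' a)^2 - (∑ a, Ψ j i a * Ψ j i a)/d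
          - (∑ a, Ψ j' i' a * Ψ j' i' a)/d + (Fintype.card (Fin m × Fin n) : ℝ)/d^2 := by
      simp only [hQ]
      exact hev
    rw [e1, hcard]
    have hnorm1 : (∑ a, Ψ j i a * Ψ j i a) = 1 := by rw [horth]; simp
    have hnorm2 : (∑ a, Ψ j' i' a * Ψ j' i' a) = 1 := by rw [horth]; simp
    rw [hnorm1, hnorm2]
    by_cases hj : j = j'
    · subst hj
      rw [horth]
      by_cases hi : i = i'
      · simp only [hi, if_pos rfl, ↓reduceIte]
        field_simp
        ring
      · simp only [if_neg hi, ↓reduceIte]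
        field_simp
        ring
    · have hS : (∑ a, Ψ j i a * Ψ j' i' a)^2 = 1/d := by
        have h1 := hmub j j' hj i i'
        have h2 : (∑ a, Ψ j i a * Ψ j' i' a)^2 = (1 / Real.sqrt d)^2 := by
          rw [← sq_abs, h1]
        rw [h2, div_pow, one_pow, Real.sq_sqrt hd0.le]
      rw [hS, if_neg hj]
      field_simp
      ring
  -- symmetry and tracelessness
  have hsymQ : ∀ j i a b, Q j i a b = Q j i b a := by
    intro j i a b
    simp only [hQ]
    by_cases h : a = b
    · subst h; rfl
    · simp [h, Ne.symm h]; ring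
  have htrQ : ∀ j i, ∑ a, Q j i a a = 0 := by
    intro j i
    have hqa : ∀ a : Fin m × Fin n, Q j i a a = Ψ j i a * Ψ j i a - 1/d := by
      intro a; simp [hQ]
    rw [Finset.sum_congr rfl fun a _ => hqa a, Finset.sum_sub_distrib, horth]
    simp only [if_pos rfl, ↓reduceIte]
    rw [Finset.sum_const, card_univ, nsmul_eq_mul, hcard]
    field_simp
    ring
  -- relation between the row sums of Ψ-products and mubIP (Q j i) (Zm i₀ i₀')
  have hLQ : ∀ j i (i₀ i₀' : Fin m),
      (∑ j₂ : Fin n, Ψ j i (i₀,j₂) * Ψ j i (i₀',j₂))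
      = mubIP (Q j i) (Zm i₀ i₀') + (if i₀ = i₀' then 1/(m:ℝ) else 0) := by
    intro j i i₀ i₀'
    rw [mubIP_Zm (Q j i) (hsymQ j i) (htrQ j i) i₀ i₀']
    have hq2 : ∀ j₂ : Fin n, Q j i (i₀,j₂) (i₀',j₂)
        = Ψ j i (i₀,j₂) * Ψ j i (i₀',j₂) - (if i₀ = i₀' then 1/d else 0) := by
      intro j₂
      simp only [hQ]
      congr 1
      by_cases h : i₀ = i₀'
      · simp [h, Prod.ext_iff]
      · simp [h, Prod.ext_iff]
    have hsplit : ∑ j₂ : Fin n, Q j i (i₀,j₂) (i₀',j₂)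
        = (∑ j₂ : Fin n, Ψ j i (i₀,j₂) * Ψ j i (i₀',j₂))
          - (if i₀ = i₀' then 1/(m:ℝ) else 0) := by
      rw [Finset.sum_congr rfl fun j₂ _ => hq2 j₂, Finset.sum_sub_distrib]
      congr 1
      by_cases h : i₀ = i₀'
      · simp only [h, if_pos rfl, ↓reduceIte]
        rw [Finset.sum_const, card_univ, nsmul_eq_mul, Fintype.card_fin, hd]
        field_simp
      · simp [h]
    rw [hsplit]
    ring
  -- purity of the partial trace of each projector
  have hpur : ∀ j i, Matrix.trace (trA (Matrix.vecMulVec (Ψ j i) (Ψ j i)) ^ 2)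
      = (∑ i₀ : Fin m, ∑ i₀' : Fin m, (mubIP (Q j i) (Zm i₀ i₀'))^2) + 1/(m:ℝ) := by
    intro j i
    have e1 : Matrix.trace (trA (Matrix.vecMulVec (Ψ j i) (Ψ j i)) ^ 2)
        = ∑ j₁ : Fin n, ∑ j₂ : Fin n,
          (∑ i₂ : Fin m, Ψ j i (i₂,j₁) * Ψ j i (i₂,j₂))
            * (∑ i₂ : Fin m, Ψ j i (i₂,j₂) * Ψ j i (i₂,j₁)) := by
      rw [pow_two]
      simp [Matrix.trace, Matrix.diag, Matrix.mul_apply, trA, Matrix.vecMulVec_apply]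
    rw [e1, mub_purity_swap]
    have e2 : ∀ i₀ i₀' : Fin m, (∑ j₂ : Fin n, Ψ j i (i₀,j₂) * Ψ j i (i₀',j₂))^2
        = (mubIP (Q j i) (Zm i₀ i₀'))^2
          + ((if i₀ = i₀' then 2 * mubIP (Q j i) (Zm i₀ i₀') / (m:ℝ) else 0)
          + (if i₀ = i₀' then 1/((m:ℝ)*(m:ℝ)) else 0)) := by
      intro i₀ i₀'
      rw [hLQ j i i₀ i₀']
      split_ifs with h
      · field_simp
        ring
      · ring
    rw [Finset.sum_congr rfl fun i₀ _ => Finset.sum_congr rfl fun i₀' _ => e2 i₀ i₀']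
    simp only [Finset.sum_add_distrib]
    have emid : ∑ i₀ : Fin m, ∑ i₀' : Fin m,
        (if i₀ = i₀' then 2 * mubIP (Q j i) (Zm i₀ i₀') / (m:ℝ) else 0) = 0 := by
      have e3 : ∀ i₀ : Fin m, ∑ i₀' : Fin m,
          (if i₀ = i₀' then 2 * mubIP (Q j i) (Zm i₀ i₀') / (m:ℝ) else 0)
          = 2 * mubIP (Q j i) (Zm i₀ i₀) / (m:ℝ) := by
        intro i₀
        rw [Finset.sum_ite_eq]
        simp
      rw [Finset.sum_congr rfl fun i₀ _ => e3 i₀]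
      have e4 : ∀ i₀ : Fin m, 2 * mubIP (Q j i) (Zm i₀ i₀) / (m:ℝ)
          = 2 * (∑ j₂ : Fin n, Q j i (i₀,j₂) (i₀,j₂)) / (m:ℝ) := by
        intro i₀; rw [mubIP_Zm (Q j i) (hsymQ j i) (htrQ j i)]
      rw [Finset.sum_congr rfl fun i₀ _ => e4 i₀]
      have e5 : ∑ i₀ : Fin m, 2 * (∑ j₂ : Fin n, Q j i (i₀,j₂) (i₀,j₂)) / (m:ℝ)
          = 2 * (∑ i₀ : Fin m, ∑ j₂ : Fin n, Q j i (i₀,j₂) (i₀,j₂)) / (m:ℝ) := by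
        rw [← Finset.sum_div, ← Finset.mul_sum]
      rw [e5]
      have e6 : (∑ i₀ : Fin m, ∑ j₂ : Fin n, Q j i (i₀,j₂) (i₀,j₂))
          = ∑ a : Fin m × Fin n, Q j i a a :=
        (Fintype.sum_prod_type (f := fun a : Fin m × Fin n => Q j i a a)).symm
      rw [e6, htrQ]
      simp
    have elast : ∑ i₀ : Fin m, ∑ i₀' : Fin m,
        (if i₀ = i₀' then 1/((m:ℝ)*(m:ℝ)) else 0) = 1/(m:ℝ) := by
      have e7 : ∀ i₀ : Fin m, ∑ i₀' : Fin m,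
          (if i₀ = i₀' then 1/((m:ℝ)*(m:ℝ)) else 0) = 1/((m:ℝ)*(m:ℝ)) := by
        intro i₀; rw [Finset.sum_ite_eq]; simp
      rw [Finset.sum_congr rfl fun i₀ _ => e7 i₀, Finset.sum_const, card_univ,
        Fintype.card_fin, nsmul_eq_mul]
      field_simp
    rw [emid, elast]
    ring
  -- main chain
  calc ∑ j : Fin t, ∑ i : Fin (m*n),
        Matrix.trace (trA (Matrix.vecMulVec (Ψ j i) (Ψ j i)) ^ 2)
      = ∑ j : Fin t, ∑ i : Fin (m*n),
          ((∑ i₀ : Fin m, ∑ i₀' : Fin m, (mubIP (Q j i) (Zm i₀ i₀'))^2) + 1/(m:ℝ)) :=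
        Finset.sum_congr rfl fun j _ => Finset.sum_congr rfl fun i _ => hpur j i
    _ = (∑ j : Fin t, ∑ i : Fin (m*n), ∑ i₀ : Fin m, ∑ i₀' : Fin m,
          (mubIP (Q j i) (Zm i₀ i₀'))^2) + (t:ℝ) * n := by
        simp only [Finset.sum_add_distrib]
        congr 1
        rw [Finset.sum_const, Finset.sum_const, card_univ, card_univ,
          Fintype.card_fin, Fintype.card_fin, nsmul_eq_mul, nsmul_eq_mul]
        push_cast
        field_simp
    _ = (∑ i₀ : Fin m, ∑ i₀' : Fin m, ∑ j : Fin t, ∑ i : Fin (m*n),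
          (mubIP (Q j i) (Zm i₀ i₀'))^2) + (t:ℝ) * n := by rw [mub_sum_comm4]
    _ ≤ (∑ i₀ : Fin m, ∑ i₀' : Fin m, mubIP (Zm (n := n) i₀ i₀') (Zm i₀ i₀'))
          + (t:ℝ) * n := by
        refine add_le_add_left
          (Finset.sum_le_sum fun i₀ _ => Finset.sum_le_sum fun i₀' _ => ?_) _
        have hb := mub_bessel (β := Fin t × Fin (m*n)) (fun p => Q p.1 p.2)
          (fun c => mub_gram_bound d hd0 Q hGQ c) (Zm i₀ i₀')
        rw [Fintype.sum_prod_type] at hb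
        exact hb
    _ = (∑ i₀ : Fin m, ∑ i₀' : Fin m,
          (if i₀ = i₀' then (n:ℝ)*((m:ℝ)-1)/m else (n:ℝ)/2)) + (t:ℝ)*n := by
        rw [Finset.sum_congr rfl fun i₀ _ =>
          Finset.sum_congr rfl fun i₀' _ => mubIP_Zm_self hm i₀ i₀']
    _ ≤ ((m : ℝ) * (m + 1) / 2 + (t : ℝ) - 1) * n := by
        have hrow : ∀ i₀ : Fin m,
            ∑ i₀' : Fin m, (if i₀ = i₀' then (n:ℝ)*((m:ℝ)-1)/m else (n:ℝ)/2)
            = (m:ℝ)*((n:ℝ)/2) + ((n:ℝ)*((m:ℝ)-1)/m - (n:ℝ)/2) := by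
          intro i₀
          have hsplit2 : ∀ i₀' : Fin m,
              (if i₀ = i₀' then (n:ℝ)*((m:ℝ)-1)/m else (n:ℝ)/2)
              = (n:ℝ)/2 + (if i₀ = i₀' then (n:ℝ)*((m:ℝ)-1)/m - (n:ℝ)/2 else 0) := by
            intro i₀'; split_ifs <;> ring
          rw [Finset.sum_congr rfl fun i₀' _ => hsplit2 i₀', Finset.sum_add_distrib,
            Finset.sum_const, card_univ, Fintype.card_fin, nsmul_eq_mul,
            Finset.sum_ite_eq]
          simp
        rw [Finset.sum_congr rfl fun i₀ _ => hrow i₀, Finset.sum_const, card_univ,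
          Fintype.card_fin, nsmul_eq_mul]
        have harith : (m:ℝ)*((m:ℝ)*((n:ℝ)/2) + ((n:ℝ)*((m:ℝ)-1)/m - (n:ℝ)/2)) + (t:ℝ)*n
            = ((m : ℝ) * (m + 1) / 2 + (t : ℝ) - 1) * n := by
          field_simp
          ring
        rw [harith]
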